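/- arXiv:1511.09467 — 5 statements merged into one kernel-verified Lean document; each statement's English description precedes it below -/
import Mathlib

section
/- Let k ≥ 1 be an integer, let G = ℤ/2ℤ × ℤ/2ℤ × ℤ/(2k+1)ℤ (written additively), let S = {(1,0,0), (0,1,0), (1,1,1)}, and let ι be the inversion (negation) automorphism of G. Then the generalized Cayley graph GC(G, S, ι) is not vertex-transitive: it is not the case that for every pair of vertices u, v there is a graph automorphism of GC(G, S, ι) mapping u to v. -/
/-- The generalized Cayley graph `GC(G, S, α)` for an additively written group. -/
def GCadd {G : Type*} [AddGroup G] (α : G ≃+ G) (S : Set G)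
    (h1 : ∀ x : G, α (α x) = x)
    (h2 : ∀ x : G, α (-x) + x ∉ S)
    (h3 : ⇑α '' (-S) = S) : SimpleGraph G where
  Adj x y := α (-x) + y ∈ S
  symm := by
    constructor
    intro x y hxy
    have hmem : -(α (-x) + y) ∈ -S := by simpa [Set.mem_neg] using hxy
    have himg : α (-(α (-x) + y)) ∈ ⇑α '' (-S) := Set.mem_image_of_mem _ hmem
    rw [h3] at himg
    simpa [neg_add_rev, map_add, map_neg, h1] using himg
  loopless := ⟨fun x hx => h2 x hx⟩

private lemma double_ne_one_mod_two : ∀ a : ZMod 2, a + a ≠ 1 := by decide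

private lemma ten_h1 (k : ℕ) :
    ∀ x : ZMod 2 × ZMod 2 × ZMod (2 * k + 1),
      (AddEquiv.neg (ZMod 2 × ZMod 2 × ZMod (2 * k + 1)))
        ((AddEquiv.neg (ZMod 2 × ZMod 2 × ZMod (2 * k + 1))) x) = x := by
  intro x; simp

private lemma ten_h2 (k : ℕ) (hk : 1 ≤ k) :
    ∀ x : ZMod 2 × ZMod 2 × ZMod (2 * k + 1),
      (AddEquiv.neg (ZMod 2 × ZMod 2 × ZMod (2 * k + 1))) (-x) + x ∉
        ({(1, 0, 0), (0, 1, 0), (1, 1, 1)} :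
          Set (ZMod 2 × ZMod 2 × ZMod (2 * k + 1))) := by
  intro x hx
  have hx' : x + x ∈ ({(1, 0, 0), (0, 1, 0), (1, 1, 1)} :
      Set (ZMod 2 × ZMod 2 × ZMod (2 * k + 1))) := by simpa using hx
  simp only [Set.mem_insert_iff, Set.mem_singleton_iff] at hx'
  rcases hx' with h | h | h
  · exact double_ne_one_mod_two x.1 (congrArg Prod.fst h)
  · exact double_ne_one_mod_two x.2.1 (congrArg (fun z => z.2.1) h)
  · exact double_ne_one_mod_two x.1 (congrArg Prod.fst h)

private lemma ten_h3 (k : ℕ) :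
    ⇑(AddEquiv.neg (ZMod 2 × ZMod 2 × ZMod (2 * k + 1))) ''
        (-({(1, 0, 0), (0, 1, 0), (1, 1, 1)} :
          Set (ZMod 2 × ZMod 2 × ZMod (2 * k + 1)))) =
      ({(1, 0, 0), (0, 1, 0), (1, 1, 1)} :
        Set (ZMod 2 × ZMod 2 × ZMod (2 * k + 1))) := by
  ext x
  simp only [Set.mem_image, Set.mem_neg, Set.mem_insert_iff, Set.mem_singleton_iff,
    AddEquiv.neg_apply]
  constructor
  · rintro ⟨y, hy, rfl⟩
    rcases hy with h | h | h <;> simp_all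
  · intro hx
    exact ⟨-x, by simpa using hx, by simp⟩

/-- For `k ≥ 1`, `G = ℤ/2ℤ × ℤ/2ℤ × ℤ/(2k+1)ℤ`, `S = {(1,0,0),(0,1,0),(1,1,1)}`
and `ι` the negation automorphism, the generalized Cayley graph `GC(G, S, ι)` is not
vertex-transitive. -/
theorem stmt_10 (k : ℕ) (hk : 1 ≤ k) :
    ¬ ∀ u v : ZMod 2 × ZMod 2 × ZMod (2 * k + 1),
        ∃ e : GCadd (AddEquiv.neg (ZMod 2 × ZMod 2 × ZMod (2 * k + 1)))
              {(1, 0, 0), (0, 1, 0), (1, 1, 1)} (ten_h1 k) (ten_h2 k hk) (ten_h3 k) ≃g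
            GCadd (AddEquiv.neg (ZMod 2 × ZMod 2 × ZMod (2 * k + 1)))
              {(1, 0, 0), (0, 1, 0), (1, 1, 1)} (ten_h1 k) (ten_h2 k hk) (ten_h3 k),
          e u = v := by
  intro H
  haveI : Fact (1 < 2 * k + 1) := ⟨by omega⟩
  have h01 : (0 : ZMod (2 * k + 1)) ≠ 1 := zero_ne_one
  have h10 : (1 : ZMod (2 * k + 1)) ≠ 0 := fun h => h01 h.symm
  have hcast : ((2 * k + 1 : ℕ) : ZMod (2 * k + 1)) = 0 := ZMod.natCast_self _
  push_cast at hcast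
  set Gr := GCadd (AddEquiv.neg (ZMod 2 × ZMod 2 × ZMod (2 * k + 1)))
      {(1, 0, 0), (0, 1, 0), (1, 1, 1)} (ten_h1 k) (ten_h2 k hk) (ten_h3 k) with hGr
  set x : ZMod 2 × ZMod 2 × ZMod (2 * k + 1) := (1, 1, (k : ZMod (2 * k + 1))) with hx
  set y : ZMod 2 × ZMod 2 × ZMod (2 * k + 1) := (0, 1, (k : ZMod (2 * k + 1)) + 1) with hy
  set z : ZMod 2 × ZMod 2 × ZMod (2 * k + 1) := (1, 0, (k : ZMod (2 * k + 1)) + 1) with hz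
  obtain ⟨e, he⟩ := H x 0
  have hAdj : ∀ a b : ZMod 2 × ZMod 2 × ZMod (2 * k + 1),
      Gr.Adj a b ↔ a + b ∈ ({(1, 0, 0), (0, 1, 0), (1, 1, 1)} :
        Set (ZMod 2 × ZMod 2 × ZMod (2 * k + 1))) := by
    intro a b
    simp [hGr, GCadd, AddEquiv.neg_apply]
  have hsum0 : (k : ZMod (2 * k + 1)) + ((k : ZMod (2 * k + 1)) + 1) = 0 := by
    linear_combination hcast
  have hsum1 : ((k : ZMod (2 * k + 1)) + 1) + ((k : ZMod (2 * k + 1)) + 1) = 1 := by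
    linear_combination hcast
  have hxy : Gr.Adj x y := by
    rw [hAdj, hx, hy]
    simp only [Set.mem_insert_iff, Set.mem_singleton_iff, Prod.mk_add_mk, Prod.mk.injEq]
    exact Or.inl ⟨by decide, by decide, hsum0⟩
  have hxz : Gr.Adj x z := by
    rw [hAdj, hx, hz]
    simp only [Set.mem_insert_iff, Set.mem_singleton_iff, Prod.mk_add_mk, Prod.mk.injEq]
    exact Or.inr (Or.inl ⟨by decide, by decide, hsum0⟩)
  have hyz : Gr.Adj y z := by
    rw [hAdj, hy, hz]
    simp only [Set.mem_insert_iff, Set.mem_singleton_iff, Prod.mk_add_mk, Prod.mk.injEq]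
    exact Or.inr (Or.inr ⟨by decide, by decide, hsum1⟩)
  have hey : e y ∈ ({(1, 0, 0), (0, 1, 0), (1, 1, 1)} :
      Set (ZMod 2 × ZMod 2 × ZMod (2 * k + 1))) := by
    have h := e.map_adj_iff.mpr hxy
    rw [he, hAdj, zero_add] at h
    exact h
  have hez : e z ∈ ({(1, 0, 0), (0, 1, 0), (1, 1, 1)} :
      Set (ZMod 2 × ZMod 2 × ZMod (2 * k + 1))) := by
    have h := e.map_adj_iff.mpr hxz
    rw [he, hAdj, zero_add] at h
    exact h
  have heyz : e y + e z ∈ ({(1, 0, 0), (0, 1, 0), (1, 1, 1)} :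
      Set (ZMod 2 × ZMod 2 × ZMod (2 * k + 1))) := by
    have h := e.map_adj_iff.mpr hyz
    rw [hAdj] at h
    exact h
  have hne : e y ≠ e z := by
    intro h
    have hyz' : y = z := e.toEquiv.injective h
    have : (0 : ZMod 2) = 1 := congrArg Prod.fst hyz'
    exact absurd this (by decide)
  simp only [Set.mem_insert_iff, Set.mem_singleton_iff] at hey hez heyz
  rcases hey with h1 | h1 | h1 <;> rcases hez with h2 | h2 | h2 <;>
    first
      | exact hne (h1.trans h2.symm)
      | (rw [h1, h2] at heyz;
         simp only [Prod.mk_add_mk, Prod.mk.injEq] at heyz;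
         rcases heyz with h3 | h3 | h3 <;>
           first
             | exact absurd h3.1 (by decide)
             | exact absurd h3.2.1 (by decide)
             | exact h01 (by linear_combination h3.2.2)
             | exact h10 (by linear_combination h3.2.2))
end

section
/- Let X = GC(G₁, S₁, α₁) and Y = GC(G₂, S₂, α₂) be generalized Cayley graphs, and let α be the automorphism of G₁ × G₂ defined by α(g₁, g₂) = (α₁(g₁), α₂(g₂)). Then α² = 1, the set S₁ × S₂ satisfies α((x)⁻¹)·x ∉ S₁ × S₂ for all x ∈ G₁ × G₂ and α((S₁ × S₂)⁻¹) = S₁ × S₂, and the generalized Cayley graph GC(G₁ × G₂, S₁ × S₂, α) is exactly the direct (tensor) product of X and Y: two vertices (x₁, y₁) and (x₂, y₂) are adjacent in GC(G₁ × G₂, S₁ × S₂, α) if and only if x₁ is adjacent to x₂ in X and y₁ is adjacent to y₂ in Y. -/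
/-- The generalized Cayley graph `GC(G, S, α)`. -/
def GC {G : Type*} [Group G] (α : G ≃* G) (S : Set G)
    (h1 : ∀ x : G, α (α x) = x)
    (h2 : ∀ x : G, α x⁻¹ * x ∉ S)
    (h3 : ⇑α '' S⁻¹ = S) : SimpleGraph G where
  Adj x y := α x⁻¹ * y ∈ S
  symm := by
    constructor
    intro x y hxy
    have hmem : (α x⁻¹ * y)⁻¹ ∈ S⁻¹ := by simpa [Set.mem_inv] using hxy
    have himg : α ((α x⁻¹ * y)⁻¹) ∈ ⇑α '' S⁻¹ := Set.mem_image_of_mem _ hmem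
    rw [h3] at himg
    simpa [mul_inv_rev, map_mul, map_inv, h1] using himg
  loopless := ⟨fun x hx => h2 x hx⟩

/-- For generalized Cayley graphs `X = GC(G₁, S₁, α₁)` and
`Y = GC(G₂, S₂, α₂)`, the pair `(S₁ × S₂, α₁ × α₂)` satisfies the defining conditions of
a generalized Cayley graph on `G₁ × G₂`, and `GC(G₁ × G₂, S₁ × S₂, α₁ × α₂)` is exactly
the direct (tensor) product `X × Y`: `(x₁, y₁) ~ (x₂, y₂)` iff `x₁ ~ x₂` in `X` and
`y₁ ~ y₂` in `Y`. -/
theorem stmt_11 {G₁ G₂ : Type*} [Group G₁] [Group G₂]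
    (α₁ : G₁ ≃* G₁) (S₁ : Set G₁)
    (h11 : ∀ x : G₁, α₁ (α₁ x) = x)
    (h12 : ∀ x : G₁, α₁ x⁻¹ * x ∉ S₁)
    (h13 : ⇑α₁ '' S₁⁻¹ = S₁)
    (α₂ : G₂ ≃* G₂) (S₂ : Set G₂)
    (h21 : ∀ x : G₂, α₂ (α₂ x) = x)
    (h22 : ∀ x : G₂, α₂ x⁻¹ * x ∉ S₂)
    (h23 : ⇑α₂ '' S₂⁻¹ = S₂) :
    ∃ (h1 : ∀ x : G₁ × G₂, (α₁.prodCongr α₂) ((α₁.prodCongr α₂) x) = x)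
      (h2 : ∀ x : G₁ × G₂, (α₁.prodCongr α₂) x⁻¹ * x ∉ S₁ ×ˢ S₂)
      (h3 : ⇑(α₁.prodCongr α₂) '' (S₁ ×ˢ S₂)⁻¹ = S₁ ×ˢ S₂),
      ∀ a b : G₁ × G₂,
        (GC (α₁.prodCongr α₂) (S₁ ×ˢ S₂) h1 h2 h3).Adj a b ↔
          (GC α₁ S₁ h11 h12 h13).Adj a.1 b.1 ∧ (GC α₂ S₂ h21 h22 h23).Adj a.2 b.2 := by
  refine ⟨fun x => Prod.ext (h11 x.1) (h21 x.2), fun x hx => h12 x.1 hx.1, ?_, fun a b => ?_⟩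
  · ext ⟨x, y⟩
    constructor
    · rintro ⟨⟨a, b⟩, ⟨ha, hb⟩, hab⟩
      obtain ⟨rfl, rfl⟩ := Prod.mk.injEq .. ▸ hab
      exact ⟨h13 ▸ ⟨a, ha, rfl⟩, h23 ▸ ⟨b, hb, rfl⟩⟩
    · rintro ⟨hx, hy⟩
      rw [← h13] at hx; rw [← h23] at hy
      obtain ⟨a, ha, rfl⟩ := hx; obtain ⟨b, hb, rfl⟩ := hy
      exact ⟨(a, b), ⟨ha, hb⟩, rfl⟩
  · rfl
end

section
/- Let p be a prime. Then every generalized Cayley graph on the dihedral group D_{2p} of order 2p is a Cayley graph; that is, for every subset S ⊆ D_{2p} and every automorphism α of D_{2p} with α² = 1 such that α(x⁻¹)·x ∉ S for all x and α(S⁻¹) = S, the graph GC(D_{2p}, S, α) is isomorphic to a Cayley graph Cay(H, T) for some group H and subset T with 1 ∉ T and T⁻¹ = T. -/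
/-- The Cayley graph `Cay(H, T)`. -/
def Cay {H : Type*} [Group H] (T : Set H) (hT1 : (1 : H) ∉ T) (hT2 : T⁻¹ = T) :
    SimpleGraph H where
  Adj x y := x⁻¹ * y ∈ T
  symm := by
    constructor
    intro x y hxy
    have : (x⁻¹ * y)⁻¹ ∈ T⁻¹ := by simpa [Set.mem_inv] using hxy
    rw [hT2] at this
    simpa [mul_inv_rev] using this
  loopless := ⟨fun x hx => hT1 (by simpa using hx)⟩

/-- A representation of the graph `X` as a Cayley graph: a group, together with a
connection set `T` with `1 ∉ T` and `T⁻¹ = T`, whose Cayley graph is isomorphic to `X`. -/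
structure CayleyRepn {V : Type*} (X : SimpleGraph V) where
  carrier : Type
  [group : Group carrier]
  conn : Set carrier
  one_not_mem : (1 : carrier) ∉ conn
  inv_eq : conn⁻¹ = conn
  iso : Nonempty (X ≃g Cay conn one_not_mem inv_eq)

/-- A graph is a Cayley graph if it is isomorphic to `Cay(H, T)` for some group `H` and
some subset `T ⊆ H` with `1 ∉ T` and `T⁻¹ = T`. -/
def IsCayleyGraph {V : Type*} (X : SimpleGraph V) : Prop := Nonempty (CayleyRepn X)

section Aux

lemma mem_iff_of_h3 {G : Type*} [Group G] (α : G ≃* G) (S : Set G)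
    (h1 : ∀ x : G, α (α x) = x) (h3 : ⇑α '' S⁻¹ = S) (z : G) :
    z ∈ S ↔ α z⁻¹ ∈ S := by
  constructor
  · intro hz
    rw [← h3]
    exact Set.mem_image_of_mem _ (by simpa using hz)
  · intro hz
    rw [← h3] at hz
    obtain ⟨t, ht, hteq⟩ := hz
    have htz : t = z⁻¹ := by
      have := congrArg α hteq
      rwa [h1, h1] at this
    subst htz
    simpa using ht

lemma buildRepn {G : Type} [Group G] (α : G ≃* G) (S : Set G)
    (h1 : ∀ x : G, α (α x) = x) (h2 : ∀ x : G, α x⁻¹ * x ∉ S) (h3 : ⇑α '' S⁻¹ = S)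
    (key : ∀ x y : G, α x⁻¹ * y ∈ S ↔ x⁻¹ * y ∈ S) :
    IsCayleyGraph (GC α S h1 h2 h3) := by
  have hone : (1 : G) ∉ S := by simpa using h2 1
  have hαS : ∀ z : G, α z ∈ S ↔ z ∈ S := fun z => by simpa using key z⁻¹ 1
  have hinv : S⁻¹ = S := by
    ext z
    have h := mem_iff_of_h3 α S h1 h3 z⁻¹
    rw [inv_inv] at h
    rw [Set.mem_inv, h, hαS]
  exact ⟨{ carrier := G, conn := S, one_not_mem := hone, inv_eq := hinv,
           iso := ⟨⟨Equiv.refl G, fun {x y} => (key x y).symm⟩⟩ }⟩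


lemma klein_key (α : DihedralGroup 2 ≃* DihedralGroup 2) (S : Set (DihedralGroup 2))
    (h2 : ∀ x : DihedralGroup 2, α x⁻¹ * x ∉ S)
    (hex : ∃ x, α x ≠ x)
    (h1 : ∀ x : DihedralGroup 2, α (α x) = x)
    (mem_iff : ∀ z : DihedralGroup 2, z ∈ S ↔ α z⁻¹ ∈ S) :
    ∀ x y : DihedralGroup 2, α x⁻¹ * y ∈ S ↔ x⁻¹ * y ∈ S := by
  have hadd : ∀ i : ZMod 2, i + i = 0 := by decide
  have hsq : ∀ x : DihedralGroup 2, x * x = 1 := by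
    rintro (i | i)
    · rw [DihedralGroup.r_mul_r, hadd, DihedralGroup.one_def]
    · rw [DihedralGroup.sr_mul_sr, sub_self, DihedralGroup.one_def]
  have hinvs : ∀ x : DihedralGroup 2, x⁻¹ = x := fun x => inv_eq_of_mul_eq_one_right (hsq x)
  have hneg : ∀ i : ZMod 2, -i = i := by decide
  have hcomm : ∀ x y : DihedralGroup 2, x * y = y * x := by
    rintro (i | i) (j | j) <;>
      simp [DihedralGroup.r_mul_r, DihedralGroup.r_mul_sr, DihedralGroup.sr_mul_r,
        DihedralGroup.sr_mul_sr, sub_eq_add_neg, hneg, add_comm]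
  obtain ⟨u, hu⟩ := hex
  have hαv : α (α u) = u := h1 u
  set v := α u with hv
  have hαS : ∀ z : DihedralGroup 2, z ∈ S ↔ α z ∈ S := by
    intro z
    rw [mem_iff z, hinvs]
  have hu1 : u ≠ 1 := by
    rintro rfl
    exact hu (map_one α)
  have hv1 : v ≠ 1 := by
    intro h
    apply hu1
    rw [← hαv, h, map_one]
  have hvu : v ≠ u := hu
  set w := u * v with hw
  have hw1 : w ≠ 1 := by
    intro h
    exact hvu (by rw [← inv_eq_of_mul_eq_one_right h, hinvs])
  have hwu : w ≠ u := by
    intro h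
    exact hv1 (mul_left_cancel (a := u) (show u * v = u * 1 by rw [mul_one, ← hw, h]))
  have hwv : w ≠ v := by
    intro h
    exact hu1 (mul_right_cancel (b := v) (show u * v = 1 * v by rw [one_mul, ← hw, h]))
  have hαw : α w = w := by
    rw [hw, map_mul, ← hv, hαv, hcomm]
  have henum : ∀ z : DihedralGroup 2, z = 1 ∨ z = u ∨ z = v ∨ z = w := by
    intro z
    have hcard : Fintype.card (DihedralGroup 2) = 4 := by rw [DihedralGroup.card]
    have huniv : ({1, u, v, w} : Finset (DihedralGroup 2)) = Finset.univ := by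
      apply Finset.eq_univ_of_card
      rw [hcard]
      rw [Finset.card_insert_of_notMem (by simp [hu1.symm, hv1.symm, hw1.symm]),
        Finset.card_insert_of_notMem (by simp [hvu.symm, hwu.symm]),
        Finset.card_insert_of_notMem (by simp [hwv.symm]), Finset.card_singleton]
    have hz := huniv ▸ Finset.mem_univ z
    simpa using hz
  have hS : ∀ z ∈ S, z = u ∨ z = v := by
    intro z hz
    rcases henum z with h | h | h | h
    · rw [h] at hz
      exact absurd hz (by simpa using h2 1)
    · exact Or.inl h
    · exact Or.inr h
    · exfalso
      have hh := h2 u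
      rw [hinvs, ← hv, hcomm] at hh
      rw [h] at hz
      exact hh hz
  have hwS : ∀ z, z ∈ S → w * z ∈ S := by
    intro z hz
    rcases hS z hz with h | h
    · have he : w * z = v := by
        rw [h, hw, hcomm u v, mul_assoc, hsq, mul_one]
      rw [he, hv]
      rw [← h]
      exact (hαS z).mp hz
    · have he : w * z = u := by rw [h, hw, mul_assoc, hsq, mul_one]
      rw [he]
      rw [hαS z, h, hαv] at hz
      exact hz
  have hwS' : ∀ z, z ∈ S ↔ w * z ∈ S := by
    intro z
    refine ⟨hwS z, fun h => ?_⟩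
    have hh := hwS _ h
    rwa [← mul_assoc, hsq, one_mul] at hh
  intro x y
  rw [hinvs]
  rcases henum x with h | h | h | h <;> rw [h]
  · simp
  · rw [← hv]
    have he : v * y = w * (u * y) := by
      rw [hw, hcomm u v, mul_assoc, ← mul_assoc u u y, hsq, one_mul]
    rw [he, ← hwS']
  · rw [hαv]
    have he : u * y = w * (v * y) := by
      rw [hw, mul_assoc, ← mul_assoc v v y, hsq, one_mul]
    rw [he, ← hwS']
  · rw [hαw]


open DihedralGroup

lemma r_pow' {n : ℕ} (i : ZMod n) (k : ℕ) : (r i) ^ k = r ((k : ZMod n) * i) := by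
  induction k with
  | zero => rw [pow_zero, Nat.cast_zero, zero_mul, one_def]
  | succ k ih =>
    rw [pow_succ, ih, r_mul_r]
    congr 1
    push_cast
    ring

lemma zmod_two_ne_zero (p : ℕ) (hp : p.Prime) (hp2 : p ≠ 2) : (2 : ZMod p) ≠ 0 := by
  haveI : Fact p.Prime := ⟨hp⟩
  intro h
  have hd : p ∣ 2 := by
    have : ((2 : ℕ) : ZMod p) = 0 := by exact_mod_cast h
    exact (ZMod.natCast_eq_zero_iff 2 p).mp this
  exact hp2 ((Nat.prime_dvd_prime_iff_eq hp Nat.prime_two).mp hd)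

lemma natCast_val_self {p : ℕ} [NeZero p] (i : ZMod p) : ((i.val : ℕ) : ZMod p) = i := by
  rw [ZMod.natCast_val, ZMod.cast_id]

lemma r_eq_pow {p : ℕ} [NeZero p] (i : ZMod p) : (r i : DihedralGroup p) = (r 1) ^ i.val := by
  rw [r_one_pow, natCast_val_self]

lemma classify (p : ℕ) (hp : p.Prime) (hp2 : p ≠ 2)
    (α : DihedralGroup p ≃* DihedralGroup p)
    (h1 : ∀ x : DihedralGroup p, α (α x) = x)
    (hex : ∃ x, α x ≠ x) :
    ∃ c : ZMod p, ∀ x, α x = sr c * x * (sr c)⁻¹ := by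
  haveI : Fact p.Prime := ⟨hp⟩
  haveI : NeZero p := ⟨hp.pos.ne'⟩
  have h2z : (2 : ZMod p) ≠ 0 := zmod_two_ne_zero p hp hp2
  -- α (r 1) is a rotation
  obtain ⟨a, ha⟩ : ∃ a, α (r 1) = r a := by
    cases hcase : α (r 1) with
    | r a => exact ⟨a, rfl⟩
    | sr b =>
      exfalso
      have hinj : r ((1 : ZMod p) + 1) = (1 : DihedralGroup p) := by
        apply α.injective
        rw [map_one, show r ((1:ZMod p)+1) = r 1 * r 1 from rfl, map_mul, hcase, sr_mul_sr,
          sub_self, one_def]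
      rw [one_def] at hinj
      have : (1 : ZMod p) + 1 = 0 := by injection hinj
      rw [one_add_one_eq_two] at this
      exact h2z this
  have hαr : ∀ i : ZMod p, α (r i) = r (i * a) := by
    intro i
    rw [r_eq_pow i, map_pow, ha, r_pow', natCast_val_self]
  have ha2 : a * a = 1 := by
    have := h1 (r 1)
    rw [ha, hαr] at this
    simpa using this
  -- α (sr 0) is a reflection
  obtain ⟨b, hb⟩ : ∃ b, α (sr 0) = sr b := by
    cases hcase : α (sr 0) with
    | sr b => exact ⟨b, rfl⟩
    | r k =>
      exfalso
      have hks : r (k + k) = (1 : DihedralGroup p) := by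
        rw [show r (k + k) = r k * r k from rfl, ← hcase, ← map_mul, sr_mul_sr, sub_self,
          ← one_def, map_one]
      rw [one_def] at hks
      have hk0 : k + k = 0 := by injection hks
      have : k = 0 := by
        have h2k : (2 : ZMod p) * k = 0 := by rw [two_mul]; exact hk0
        rcases mul_eq_zero.mp h2k with h | h
        · exact absurd h h2z
        · exact h
      rw [this, ← one_def] at hcase
      have : sr (0 : ZMod p) = (1 : DihedralGroup p) := α.injective (by rw [hcase, map_one])
      rw [one_def] at this
      exact absurd this (by intro h; cases h)
  have hαsr : ∀ i : ZMod p, α (sr i) = sr (b + i * a) := by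
    intro i
    rw [show sr i = sr 0 * r i from by rw [sr_mul_r, zero_add], map_mul, hb, hαr, sr_mul_r]
  rcases mul_self_eq_one_iff.mp ha2 with ha1 | ha1
  · -- a = 1 : α = id, contradiction
    exfalso
    have hb0 : b = 0 := by
      have := h1 (sr 0)
      rw [hαsr, hαsr] at this
      have h' : b + (b + 0 * a) * a = (0 : ZMod p) := by injection this
      rw [ha1] at h'
      rw [zero_mul, add_zero, mul_one] at h'
      have h2b : (2 : ZMod p) * b = 0 := by rw [two_mul]; exact h'
      rcases mul_eq_zero.mp h2b with h | h
      · exact absurd h h2z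
      · exact h
    obtain ⟨x, hx⟩ := hex
    apply hx
    cases x with
    | r i => rw [hαr, ha1, mul_one]
    | sr i => rw [hαsr, ha1, hb0, mul_one, zero_add]
  · -- a = -1 : α is conjugation by sr (b/2)
    refine ⟨b * (2 : ZMod p)⁻¹, ?_⟩
    have hcc : b * (2 : ZMod p)⁻¹ + b * (2 : ZMod p)⁻¹ = b := by
      rw [← two_mul]
      field_simp
    intro x
    have hsrinv : (sr (b * (2:ZMod p)⁻¹) : DihedralGroup p)⁻¹ = sr (b * (2:ZMod p)⁻¹) :=
      inv_eq_of_mul_eq_one_right (by rw [sr_mul_sr, sub_self, one_def])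
    rw [hsrinv]
    cases x with
    | r i =>
      rw [hαr, ha1, sr_mul_r, sr_mul_sr]
      congr 1
      ring
    | sr i =>
      rw [hαsr, ha1, sr_mul_sr, r_mul_sr]
      congr 1
      linear_combination -hcc

lemma conjCase (p : ℕ) (hp : p.Prime) (hp2 : p ≠ 2)
    (α : DihedralGroup p ≃* DihedralGroup p) (S : Set (DihedralGroup p))
    (h1 : ∀ x : DihedralGroup p, α (α x) = x)
    (h2 : ∀ x : DihedralGroup p, α x⁻¹ * x ∉ S)
    (h3 : ⇑α '' S⁻¹ = S)
    (c : ZMod p) (hα : ∀ x, α x = sr c * x * (sr c)⁻¹) :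
    IsCayleyGraph (GC α S h1 h2 h3) := by
  haveI : Fact p.Prime := ⟨hp⟩
  haveI : NeZero p := ⟨hp.pos.ne'⟩
  have h2z : (2 : ZMod p) ≠ 0 := zmod_two_ne_zero p hp hp2
  have hsrinv : ∀ j : ZMod p, (sr j : DihedralGroup p)⁻¹ = sr j := fun j =>
    inv_eq_of_mul_eq_one_right (by rw [sr_mul_sr, sub_self, one_def])
  have hrinv : ∀ i : ZMod p, (r i : DihedralGroup p)⁻¹ = r (-i) := fun i =>
    inv_eq_of_mul_eq_one_right (by rw [r_mul_r, add_neg_cancel, one_def])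
  have hαr : ∀ i : ZMod p, α (r i) = r (-i) := by
    intro i
    rw [hα, hsrinv, sr_mul_r, sr_mul_sr]
    congr 1
    ring
  have hαsr : ∀ i : ZMod p, α (sr i) = sr (c + c - i) := by
    intro i
    rw [hα, hsrinv, sr_mul_sr, r_mul_sr]
    congr 1
    ring
  have hrot : ∀ k : ZMod p, r k ∉ S := by
    intro k hk
    apply h2 (r ((2 : ZMod p)⁻¹ * k))
    rw [hrinv, hαr, neg_neg, r_mul_r]
    have he : (2 : ZMod p)⁻¹ * k + (2:ZMod p)⁻¹ * k = k := by
      rw [← two_mul, ← mul_assoc, mul_inv_cancel₀ h2z, one_mul]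
    rw [he]
    exact hk
  have hB : ∀ b : ZMod p, sr b ∈ S ↔ sr (c + c - b) ∈ S := by
    intro b
    have hh := mem_iff_of_h3 α S h1 h3 (sr b)
    rwa [hsrinv, hαsr] at hh
  classical
  -- the bijection with Multiplicative (ZMod 2 × ZMod p)
  let f : DihedralGroup p → Multiplicative (ZMod 2 × ZMod p) := fun x =>
    match x with
    | DihedralGroup.r i => Multiplicative.ofAdd ((0 : ZMod 2), i)
    | DihedralGroup.sr j => Multiplicative.ofAdd ((1 : ZMod 2), j - c)
  let g : Multiplicative (ZMod 2 × ZMod p) → DihedralGroup p := fun z =>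
    if (Multiplicative.toAdd z).1 = 0 then r (Multiplicative.toAdd z).2
    else sr ((Multiplicative.toAdd z).2 + c)
  have hf_r : ∀ i : ZMod p, f (r i) = Multiplicative.ofAdd ((0:ZMod 2), i) := fun _ => rfl
  have hf_sr : ∀ j : ZMod p, f (sr j) = Multiplicative.ofAdd ((1:ZMod 2), j - c) := fun _ => rfl
  have hz2 : ∀ u : ZMod 2, u = 0 ∨ u = 1 := by decide
  have hleft : ∀ x, g (f x) = x := by
    rintro (i | j)
    · show g (Multiplicative.ofAdd ((0:ZMod 2), i)) = r i
      simp [g]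
    · show g (Multiplicative.ofAdd ((1:ZMod 2), j - c)) = sr j
      simp [g]
  have hright : ∀ z, f (g z) = z := by
    intro z
    rcases hz2 (Multiplicative.toAdd z).1 with h | h
    · have hg : g z = r (Multiplicative.toAdd z).2 := by simp [g, h]
      rw [hg, hf_r]
      apply Multiplicative.toAdd.injective
      exact Prod.ext h.symm rfl
    · have hg : g z = sr ((Multiplicative.toAdd z).2 + c) := by
        simp [g, h]
      rw [hg, hf_sr, add_sub_cancel_right]
      apply Multiplicative.toAdd.injective
      exact Prod.ext h.symm rfl
  let e : DihedralGroup p ≃ Multiplicative (ZMod 2 × ZMod p) :=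
    { toFun := f, invFun := g, left_inv := hleft, right_inv := hright }
  -- the connection set
  let T : Set (Multiplicative (ZMod 2 × ZMod p)) :=
    {t | ∃ b : ZMod p, sr b ∈ S ∧ t = Multiplicative.ofAdd ((1 : ZMod 2), b - c)}
  have hmem : ∀ (u : ZMod 2) (w : ZMod p),
      Multiplicative.ofAdd (u, w) ∈ T ↔ (u = 1 ∧ sr (w + c) ∈ S) := by
    intro u w
    constructor
    · rintro ⟨b, hb, heq⟩
      have h0 : (u, w) = ((1:ZMod 2), b - c) := Multiplicative.ofAdd.injective heq
      have h1' := congrArg Prod.fst h0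
      have h2' := congrArg Prod.snd h0
      simp only at h1' h2'
      refine ⟨h1', ?_⟩
      rw [h2', sub_add_cancel]
      exact hb
    · rintro ⟨rfl, hw⟩
      exact ⟨w + c, hw, by rw [add_sub_cancel_right]⟩
  have hT1 : (1 : Multiplicative (ZMod 2 × ZMod p)) ∉ T := by
    rintro ⟨b, hb, heq⟩
    have h0 : ((0:ZMod 2), (0:ZMod p)) = ((1:ZMod 2), b - c) :=
      congrArg Multiplicative.toAdd heq
    have h1' := congrArg Prod.fst h0
    simp only at h1'
    exact absurd h1' (by decide)
  have hTinv : ∀ t, t ∈ T → t⁻¹ ∈ T := by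
    rintro t ⟨b, hb, rfl⟩
    refine ⟨c + c - b, (hB b).mp hb, ?_⟩
    rw [← ofAdd_neg]
    congr 1
    rw [Prod.neg_mk, Prod.mk.injEq]
    exact ⟨by decide, by ring⟩
  have hTeq : T⁻¹ = T := by
    ext t
    rw [Set.mem_inv]
    constructor
    · intro h
      simpa using hTinv _ h
    · intro h
      have := hTinv _ h
      simpa using this
  have hmul : ∀ u v : ZMod 2 × ZMod p,
      (Multiplicative.ofAdd u)⁻¹ * Multiplicative.ofAdd v = Multiplicative.ofAdd (-u + v) :=
    fun _ _ => rfl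
  have hnegpair : ∀ (a : ZMod 2) (b : ZMod p) (a' : ZMod 2) (b' : ZMod p),
      (-(a, b) + (a', b') : ZMod 2 × ZMod p) = (-a + a', -b + b') := fun _ _ _ _ => rfl
  have hadj : ∀ x y : DihedralGroup p, (f x)⁻¹ * f y ∈ T ↔ α x⁻¹ * y ∈ S := by
    rintro (i | i) (j | j)
    · rw [hf_r, hf_r, hmul, hnegpair, hmem, hrinv, hαr, neg_neg, r_mul_r]
      exact iff_of_false (fun h => absurd h.1 (by decide)) (hrot _)
    · rw [hf_r, hf_sr, hmul, hnegpair, hmem, hrinv, hαr, neg_neg, r_mul_sr,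
        show -i + (j - c) + c = j - i from by ring]
      simp [show (-(0:ZMod 2) + 1 = 1) from by decide]
    · rw [hf_sr, hf_r, hmul, hnegpair, hmem, hsrinv, hαsr, sr_mul_r,
        show -(i - c) + j + c = c + c - i + j from by ring]
      simp [show (-(1:ZMod 2) + 0 = 1) from by decide]
    · rw [hf_sr, hf_sr, hmul, hnegpair, hmem, hsrinv, hαsr, sr_mul_sr]
      exact iff_of_false (fun h => absurd h.1 (by decide)) (hrot _)
  exact ⟨{ carrier := Multiplicative (ZMod 2 × ZMod p), conn := T,
           one_not_mem := hT1, inv_eq := hTeq,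
           iso := ⟨⟨e, fun {x y} => hadj x y⟩⟩ }⟩

end Aux

/-- Every generalized Cayley graph on the dihedral group `D_{2p}` of order
`2p`, `p` a prime, is a Cayley graph. -/
theorem stmt_14 (p : ℕ) (hp : p.Prime)
    (α : DihedralGroup p ≃* DihedralGroup p)
    (S : Set (DihedralGroup p))
    (h1 : ∀ x : DihedralGroup p, α (α x) = x)
    (h2 : ∀ x : DihedralGroup p, α x⁻¹ * x ∉ S)
    (h3 : ⇑α '' S⁻¹ = S) :
    IsCayleyGraph (GC α S h1 h2 h3) := by
  by_cases hid : ∀ x, α x = x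
  · exact buildRepn α S h1 h2 h3 (fun x y => by rw [hid (x⁻¹)])
  · push_neg at hid
    by_cases hp2 : p = 2
    · subst hp2
      exact buildRepn α S h1 h2 h3 (klein_key α S h2 hid h1 (mem_iff_of_h3 α S h1 h3))
    · obtain ⟨c, hc⟩ := classify p hp hp2 α h1 hid
      exact conjCase p hp hp2 α S h1 h2 h3 c hc
end

section
/- Let p be a prime and let G be a finite group of order 2p. Then every generalized Cayley graph on G is a Cayley graph; that is, for every subset S ⊆ G and every automorphism α of G with α² = 1 such that α(x⁻¹)·x ∉ S for all x and α(S⁻¹) = S, the graph GC(G, S, α) is isomorphic to a Cayley graph Cay(H, T) for some group H and subset T with 1 ∉ T and T⁻¹ = T. -/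
/-! ### Auxiliary material -/

/-- The subgroup of points fixed by an automorphism. -/
def fixedSubgroup {G : Type*} [Group G] (α : G ≃* G) : Subgroup G where
  carrier := {x | α x = x}
  one_mem' := map_one α
  mul_mem' := by
    intro a b ha hb
    simp only [Set.mem_setOf_eq] at *
    rw [map_mul, ha, hb]
  inv_mem' := by
    intro a ha
    simp only [Set.mem_setOf_eq] at *
    rw [map_inv, ha]

lemma mem_fixedSubgroup_iff {G : Type*} [Group G] (α : G ≃* G) (x : G) :
    x ∈ fixedSubgroup α ↔ α x = x := Iff.rfl

@[simp] lemma dihedral_inv_r {n : ℕ} (i : ZMod n) :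
    (DihedralGroup.r i)⁻¹ = DihedralGroup.r (-i) := rfl

@[simp] lemma dihedral_inv_sr {n : ℕ} (i : ZMod n) :
    (DihedralGroup.sr i)⁻¹ = DihedralGroup.sr i := rfl

/-- The key construction: if there is a subgroup `P` of index 2 on which `α` acts by
inversion, with `S` disjoint from `P`, then the generalized Cayley graph is a Cayley
graph on a (generalized) dihedral group. -/
theorem gc_isCayley_of_subgroup {p : ℕ} {G : Type*} [Group G]
    (α : G ≃* G) (S : Set G)
    (h1 : ∀ x : G, α (α x) = x)
    (h2 : ∀ x : G, α x⁻¹ * x ∉ S)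
    (h3 : ⇑α '' S⁻¹ = S)
    (P : Subgroup G) (hPi : P.index = 2)
    (hinv : ∀ x ∈ P, α x = x⁻¹)
    (hSP : ∀ s ∈ S, s ∉ P)
    (e : ↥P ≃* Multiplicative (ZMod p)) :
    IsCayleyGraph (GC α S h1 h2 h3) := by
  classical
  -- pick an element outside `P`
  obtain ⟨c, hc⟩ : ∃ c, c ∉ P := by
    by_contra hno
    push_neg at hno
    have hPtop : P = ⊤ := by
      ext x; simpa using hno x
    rw [hPtop, Subgroup.index_top] at hPi
    norm_num at hPi
  have hmul : ∀ {a b : G}, a ∉ P → b ∉ P → a * b ∈ P := by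
    intro a b ha hb
    exact (Subgroup.mul_mem_iff_of_index_two hPi).2 (iff_of_false ha hb)
  have hcinv : c⁻¹ ∉ P := fun h => hc (P.inv_mem_iff.1 h)
  have hcoset : ∀ x : G, x ∉ P → x * c⁻¹ ∈ P := fun x hx => hmul hx hcinv
  have hinv' : ∀ x : G, x ∈ P → α x⁻¹ = x := by
    intro x hx
    rw [map_inv, hinv x hx, inv_inv]
  have hαnot : ∀ x : G, x ∉ P → α x⁻¹ ∉ P := by
    intro x hx h
    have e2 : α (α x⁻¹) = (α x⁻¹)⁻¹ := hinv _ h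
    rw [h1 x⁻¹] at e2
    exact hx (by rw [inv_injective e2]; exact h)
  -- the coordinate function
  set εf : ↥P → ZMod p := fun u => Multiplicative.toAdd (e u) with hεf
  set δf : ZMod p → G := fun i => ((e.symm (Multiplicative.ofAdd i) : ↥P) : G) with hδf
  have hδmem : ∀ i, δf i ∈ P := fun i => (e.symm (Multiplicative.ofAdd i)).2
  have hδε : ∀ u : ↥P, δf (εf u) = (u : G) := by
    intro u; simp [hεf, hδf]
  have hεδ : ∀ (i : ZMod p) (h : δf i ∈ P), εf ⟨δf i, h⟩ = i := by
    intro i h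
    have : (⟨δf i, h⟩ : ↥P) = e.symm (Multiplicative.ofAdd i) := Subtype.ext rfl
    rw [this]
    simp [hεf]
  have hεinj : Function.Injective εf := by
    intro u v h
    have := congrArg δf h
    rw [hδε, hδε] at this
    exact Subtype.ext this
  have hεadd : ∀ u v : ↥P, εf (u * v) = εf u + εf v := by
    intro u v; simp [hεf]
  have hPcomm : ∀ u v : ↥P, u * v = v * u := by
    intro u v
    apply hεinj
    rw [hεadd, hεadd, add_comm]
  -- the vertex bijection
  let β : G ≃ DihedralGroup p :=
    { toFun := fun x =>
        if h : x ∈ P then DihedralGroup.r (εf ⟨x, h⟩)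
        else DihedralGroup.sr (εf ⟨x * c⁻¹, hcoset x h⟩)
      invFun := fun z => match z with
        | .r i => δf i
        | .sr i => δf i * c
      left_inv := by
        intro x
        by_cases h : x ∈ P
        · simp only [dif_pos h]
          show δf (εf ⟨x, h⟩) = x
          rw [hδε]
        · simp only [dif_neg h]
          show δf (εf ⟨x * c⁻¹, hcoset x h⟩) * c = x
          rw [hδε]
          exact inv_mul_cancel_right x c
      right_inv := by
        rintro (i | i)
        · show (if h : δf i ∈ P then _ else _) = _
          rw [dif_pos (hδmem i)]
          rw [hεδ]
        · have hn : δf i * c ∉ P := by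
            intro h
            have : (δf i)⁻¹ * (δf i * c) ∈ P := P.mul_mem (P.inv_mem (hδmem i)) h
            rw [inv_mul_cancel_left] at this
            exact hc this
          show (if h : δf i * c ∈ P then _ else _) = _
          rw [dif_neg hn]
          have hmemi : δf i * c * c⁻¹ ∈ P := hcoset _ hn
          have hsub : (⟨δf i * c * c⁻¹, hmemi⟩ : ↥P) = ⟨δf i, hδmem i⟩ :=
            Subtype.ext (mul_inv_cancel_right _ _)
          rw [hsub, hεδ] }
  have hβP : ∀ (x : G) (h : x ∈ P), β x = DihedralGroup.r (εf ⟨x, h⟩) := by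
    intro x h; show dite _ _ _ = _; rw [dif_pos h]
  have hβnP : ∀ (x : G) (h : x ∉ P), β x = DihedralGroup.sr (εf ⟨x * c⁻¹, hcoset x h⟩) := by
    intro x h; show dite _ _ _ = _; rw [dif_neg h]
  -- the connection set
  set conn : Set (DihedralGroup p) :=
    {z | ∃ d : ↥P, (d : G) * c ∈ S ∧ z = DihedralGroup.sr (εf d)} with hconn
  have memconn : ∀ w : ZMod p,
      DihedralGroup.sr w ∈ conn ↔ ∃ d : ↥P, (d : G) * c ∈ S ∧ w = εf d := by
    intro w
    constructor
    · rintro ⟨d, hd, hEq⟩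
      exact ⟨d, hd, by injection hEq⟩
    · rintro ⟨d, hd, hEq⟩
      exact ⟨d, hd, by rw [hEq]⟩
  have memconn2 : ∀ u v : ↥P,
      DihedralGroup.sr (εf u + εf v) ∈ conn ↔ ((u * v : ↥P) : G) * c ∈ S := by
    intro u v
    rw [memconn]
    constructor
    · rintro ⟨d, hd, hEq⟩
      have : εf (u * v) = εf d := by rw [hεadd, hEq]
      rwa [hεinj this]
    · intro h
      exact ⟨u * v, h, (hεadd u v).symm⟩
  have rnotconn : ∀ w : ZMod p, DihedralGroup.r w ∉ conn := by
    rintro w ⟨d, -, hEq⟩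
    exact absurd hEq (by simp)
  have hone : (1 : DihedralGroup p) ∉ conn := by
    rw [DihedralGroup.one_def]; exact rnotconn 0
  have hconninv : conn⁻¹ = conn := by
    ext z
    rw [Set.mem_inv]
    constructor
    · rintro ⟨d, hd, hEq⟩
      refine ⟨d, hd, ?_⟩
      rw [← inv_inv z, hEq, dihedral_inv_sr]
    · rintro ⟨d, hd, hEq⟩
      refine ⟨d, hd, ?_⟩
      rw [hEq, dihedral_inv_sr]
  -- adjacency transfer in the key mixed case
  have key : ∀ (x y : G) (hx : x ∈ P) (hy : y ∉ P),
      (α x⁻¹ * y ∈ S) ↔ (((⟨x, hx⟩ * ⟨y * c⁻¹, hcoset y hy⟩ : ↥P) : G) * c ∈ S) := by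
    intro x y hx hy
    have : (((⟨x, hx⟩ * ⟨y * c⁻¹, hcoset y hy⟩ : ↥P) : G)) * c = α x⁻¹ * y := by
      push_cast
      rw [hinv' x hx, mul_assoc, inv_mul_cancel_right]
    rw [this]
  refine ⟨⟨DihedralGroup p, conn, hone, hconninv, ⟨⟨β, ?_⟩⟩⟩⟩
  intro a b
  show (β a)⁻¹ * β b ∈ conn ↔ α a⁻¹ * b ∈ S
  by_cases ha : a ∈ P <;> by_cases hb : b ∈ P
  · -- both in P : no edge on either side
    rw [hβP a ha, hβP b hb]
    apply iff_of_false
    · rw [dihedral_inv_r, DihedralGroup.r_mul_r]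
      exact rnotconn _
    · intro hS
      have : α a⁻¹ * b ∈ P := by
        rw [hinv' a ha]; exact P.mul_mem ha hb
      exact hSP _ hS this
  · -- a ∈ P, b ∉ P
    rw [hβP a ha, hβnP b hb, dihedral_inv_r, DihedralGroup.r_mul_sr, sub_neg_eq_add]
    have : εf ⟨b * c⁻¹, hcoset b hb⟩ + εf ⟨a, ha⟩
        = εf ⟨a, ha⟩ + εf ⟨b * c⁻¹, hcoset b hb⟩ := add_comm _ _
    rw [this, memconn2]
    exact (key a b ha hb).symm
  · -- a ∉ P, b ∈ P
    rw [hβP b hb, hβnP a ha, dihedral_inv_sr, DihedralGroup.sr_mul_r]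
    have hcomm : (GC α S h1 h2 h3).Adj a b ↔ (GC α S h1 h2 h3).Adj b a :=
      SimpleGraph.adj_comm _ a b
    have hGC : ((GC α S h1 h2 h3).Adj a b) = (α a⁻¹ * b ∈ S) := rfl
    have hGC' : ((GC α S h1 h2 h3).Adj b a) = (α b⁻¹ * a ∈ S) := rfl
    rw [← hGC, hcomm, hGC', key b a hb ha]
    have : εf ⟨a * c⁻¹, hcoset a ha⟩ + εf ⟨b, hb⟩
        = εf ⟨b, hb⟩ + εf ⟨a * c⁻¹, hcoset a ha⟩ := add_comm _ _
    rw [this, memconn2]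
  · -- both outside P : no edge on either side
    rw [hβnP a ha, hβnP b hb, dihedral_inv_sr, DihedralGroup.sr_mul_sr]
    apply iff_of_false
    · exact rnotconn _
    · intro hS
      exact hSP _ hS (hmul (hαnot a ha) hb)

/-- Every generalized Cayley graph on a group of order `2p`, `p` a prime,
is a Cayley graph. -/
theorem stmt_15 (p : ℕ) (hp : p.Prime) {G : Type*} [Group G] [Fintype G]
    (hG : Fintype.card G = 2 * p)
    (α : G ≃* G) (S : Set G)
    (h1 : ∀ x : G, α (α x) = x)
    (h2 : ∀ x : G, α x⁻¹ * x ∉ S)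
    (h3 : ⇑α '' S⁻¹ = S) :
    IsCayleyGraph (GC α S h1 h2 h3) := by
  classical
  haveI : Fact p.Prime := ⟨hp⟩
  have hNcard : Nat.card G = 2 * p := by rw [Nat.card_eq_fintype_card, hG]
  -- a concrete model of `G` in `Type 0`
  haveI hsmall : Small.{0} G := small_of_injective (Fintype.equivFin G).injective
  let me : Shrink.{0} G ≃* G := Shrink.mulEquiv
  by_cases hS : S = ∅
  · -- empty graph
    subst hS
    refine ⟨⟨Shrink.{0} G, (∅ : Set (Shrink.{0} G)), by simp, by simp,
      ⟨⟨me.symm.toEquiv, ?_⟩⟩⟩⟩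
    intro a b
    exact iff_of_false (Set.notMem_empty _) (Set.notMem_empty _)
  by_cases hid : ∀ x : G, α x = x
  · -- `α` is the identity : already a Cayley graph
    have hSinv : S⁻¹ = S := by
      conv_rhs => rw [← h3]
      rw [show ⇑α = id from funext hid, Set.image_id]
    refine ⟨⟨Shrink.{0} G, (⇑me) ⁻¹' S, ?_, ?_, ⟨⟨me.symm.toEquiv, ?_⟩⟩⟩⟩
    · show me 1 ∈ S → False
      rw [map_one]
      simpa using h2 1
    · ext z
      rw [Set.mem_inv]
      show me z⁻¹ ∈ S ↔ me z ∈ S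
      rw [map_inv]
      constructor
      · intro h
        rw [← hSinv]
        exact Set.mem_inv.2 (by simpa using h)
      · intro h
        have h' : me z ∈ S⁻¹ := by rw [hSinv]; exact h
        simpa [Set.mem_inv] using h'
    · intro a b
      show me ((me.symm a)⁻¹ * me.symm b) ∈ S ↔ α a⁻¹ * b ∈ S
      have hh : me ((me.symm a)⁻¹ * me.symm b) = a⁻¹ * b := by
        rw [map_mul, map_inv, MulEquiv.apply_symm_apply, MulEquiv.apply_symm_apply]
      rw [hh, hid a⁻¹]
  -- now `α ≠ id` and `S ≠ ∅`
  push_neg at hid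
  obtain ⟨t, ht⟩ := hid
  obtain ⟨s0, hs0⟩ : S.Nonempty := Set.nonempty_iff_ne_empty.2 hS
  rcases hp.eq_two_or_odd' with hp2 | hodd
  · -- p = 2 : G is abelian of order 4
    subst hp2
    have hcomm : ∀ a b : G, a * b = b * a := by
      apply IsPGroup.commutative_of_card_eq_prime_sq (p := 2)
      rw [hNcard]; ring
    let q : G →* G :=
      { toFun := fun x => α x⁻¹ * x
        map_one' := by simp
        map_mul' := by
          intro a b
          show α (a * b)⁻¹ * (a * b) = α a⁻¹ * a * (α b⁻¹ * b)
          have hlc : ∀ x y z : G, x * (y * z) = y * (x * z) := fun x y z => by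
            rw [← mul_assoc, hcomm x y, mul_assoc]
          rw [mul_inv_rev, map_mul]
          simp only [mul_assoc, hcomm, hlc] }
    have hqx : ∀ x : G, q x = α x⁻¹ * x := fun _ => rfl
    -- the kernel of q is the fixed subgroup
    have hker : ∀ x : G, x ∈ q.ker ↔ α x = x := by
      intro x
      rw [MonoidHom.mem_ker, hqx]
      constructor
      · intro h
        have : α x⁻¹ = x⁻¹ := by
          rw [← mul_one (α x⁻¹), ← mul_inv_cancel x, ← mul_assoc, h, one_mul]
        rw [map_inv] at this
        exact inv_injective this
      · intro h
        rw [map_inv, h, inv_mul_cancel]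
    have hkdvd : Nat.card q.ker ∣ 4 := by
      have := Subgroup.card_subgroup_dvd_card q.ker
      rwa [hNcard] at this
    have hk1 : Nat.card q.ker ≠ 1 := by
      intro h
      have hbot : q.ker = ⊥ := Subgroup.card_eq_one.1 h
      have hinj : Function.Injective q := (MonoidHom.ker_eq_bot_iff q).1 hbot
      have hsurj : Function.Surjective q := Finite.injective_iff_surjective.1 hinj
      obtain ⟨x, hx⟩ := hsurj s0
      exact h2 x (by rw [← hqx, hx]; exact hs0)
    have hk4 : Nat.card q.ker ≠ 4 := by
      intro h
      have : q.ker = ⊤ := Subgroup.eq_top_of_card_eq _ (by rw [h, hNcard])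
      exact ht ((hker t).1 (this ▸ Subgroup.mem_top t))
    have hk2 : Nat.card q.ker = 2 := by
      have hkpos : 0 < Nat.card q.ker := Nat.card_pos
      have hkle : Nat.card q.ker ≤ 4 := Nat.le_of_dvd (by norm_num) hkdvd
      have hk3 : Nat.card q.ker ≠ 3 := by
        intro h; rw [h] at hkdvd; norm_num at hkdvd
      omega
    have hrange : Nat.card q.range = 2 := by
      have h1' : Nat.card q.ker * q.ker.index = 4 := by
        rw [Subgroup.card_mul_index, hNcard]
      rw [hk2] at h1'
      have : q.ker.index = 2 := by omega
      rw [← this, Subgroup.index_eq_card]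
      exact (Nat.card_congr (QuotientGroup.quotientKerEquivRange q).toEquiv).symm
    have hPi : q.range.index = 2 := by
      have h1' : Nat.card q.range * q.range.index = 4 := by
        rw [Subgroup.card_mul_index, hNcard]
      rw [hrange] at h1'
      omega
    have hinvP : ∀ x ∈ q.range, α x = x⁻¹ := by
      rintro x ⟨y, rfl⟩
      show α (α y⁻¹ * y) = (α y⁻¹ * y)⁻¹
      rw [map_mul, h1 y⁻¹, mul_inv_rev, map_inv, inv_inv]
    have hSP : ∀ s ∈ S, s ∉ q.range := by
      rintro s hs ⟨y, rfl⟩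
      exact h2 y hs
    haveI hcyc : IsCyclic ↥q.range := isCyclic_of_prime_card (p := 2) hrange
    have e : ↥q.range ≃* Multiplicative (ZMod 2) := by
      have e0 := (zmodCyclicMulEquiv hcyc).symm
      rw [hrange] at e0
      exact e0
    exact gc_isCayley_of_subgroup α S h1 h2 h3 q.range hPi hinvP hSP e
  · -- p odd
    obtain ⟨m, hm⟩ := hodd
    have hpdvd : p ∣ Fintype.card G := by rw [hG]; exact dvd_mul_left p 2
    obtain ⟨g, hg⟩ := exists_prime_orderOf_dvd_card p hpdvd
    set P := Subgroup.zpowers g with hP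
    have hcardP : Nat.card ↥P = p := by rw [hP, Nat.card_zpowers, hg]
    have hPi : P.index = 2 := by
      have h := Subgroup.card_mul_index P
      rw [hcardP, hNcard] at h
      have : p * P.index = p * 2 := by rw [h]; ring
      exact Nat.eq_of_mul_eq_mul_left hp.pos this
    have hsq : ∀ x : G, x * x ∈ P := Subgroup.mul_self_mem_of_index_two hPi
    have hmemP : ∀ x : G, orderOf x = p → x ∈ P := by
      intro x hx
      have hxx : (x * x) ^ (m + 1) = x := by
        rw [← pow_two, ← pow_mul]
        have h2m : 2 * (m + 1) = p + 1 := by omega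
        rw [h2m, pow_succ, ← hx, pow_orderOf_eq_one, one_mul]
      rw [← hxx]
      exact pow_mem (hsq x) _
    have hordα : orderOf (α g) = p := by rw [MulEquiv.orderOf_eq, hg]
    have hαgP : α g ∈ P := hmemP _ hordα
    obtain ⟨n, hn⟩ := Subgroup.mem_zpowers_iff.1 hαgP
    -- n² ≡ 1 (mod p)
    have hgg : α (g ^ n) = g := by
      rw [hn]; exact h1 g
    have hnn : g ^ (n * n) = g := by
      rw [zpow_mul, hn, ← map_zpow, hgg]
    have hdvd1 : (p : ℤ) ∣ n * n - 1 := by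
      have hz : g ^ (n * n - 1) = 1 := by
        rw [zpow_sub, zpow_one, hnn, mul_inv_cancel]
      have hdd := orderOf_dvd_iff_zpow_eq_one.2 hz
      rwa [hg] at hdd
    have hzm : ((n : ZMod p)) ^ 2 = 1 := by
      have h0 : ((n * n - 1 : ℤ) : ZMod p) = 0 :=
        (ZMod.intCast_zmod_eq_zero_iff_dvd _ _).2 hdvd1
      push_cast at h0
      linear_combination h0
    have hpm : (n : ZMod p) = 1 ∨ (n : ZMod p) = -1 := by
      have hfact : ((n : ZMod p) - 1) * ((n : ZMod p) + 1) = 0 := by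
        linear_combination hzm
      rcases mul_eq_zero.1 hfact with h | h
      · left; exact sub_eq_zero.1 h
      · right; exact eq_neg_of_add_eq_zero_left h
    rcases hpm with hn1 | hn1
    · -- α g = g : contradiction
      exfalso
      have hdvd2 : (p : ℤ) ∣ n - 1 := by
        have : ((n - 1 : ℤ) : ZMod p) = 0 := by push_cast [hn1]; ring
        exact (ZMod.intCast_zmod_eq_zero_iff_dvd _ _).1 this
      have hαg : α g = g := by
        rw [← hn]
        have : g ^ (n - 1) = 1 := by
          rw [← hg] at hdvd2
          exact orderOf_dvd_iff_zpow_eq_one.1 hdvd2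
        rw [zpow_sub, zpow_one] at this
        have := mul_inv_eq_one.1 this
        rw [this]
      set F := fixedSubgroup α with hF
      have hgF : g ∈ F := hαg
      have hPF : P ≤ F := by rw [hP]; exact Subgroup.zpowers_le.2 hgF
      have hcardF_dvd : Nat.card ↥F ∣ 2 * p := by
        rw [← hNcard]; exact Subgroup.card_subgroup_dvd_card F
      have hpF : p ∣ Nat.card ↥F := by
        have hh : orderOf (⟨g, hgF⟩ : ↥F) = p := by rw [Subgroup.orderOf_mk, hg]
        rw [← hh]
        exact orderOf_dvd_natCard _
      obtain ⟨d, hd⟩ := hpF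
      have hdvd2' : d ∣ 2 := by
        have : p * d ∣ p * 2 := by rw [← hd, mul_comm p 2]; exact hcardF_dvd
        exact (Nat.mul_dvd_mul_iff_left hp.pos).1 this
      rcases (Nat.prime_two.eq_one_or_self_of_dvd d hdvd2') with hd1 | hd2
      · -- card F = p : derive contradiction with the reflection argument
        have hcardF : Nat.card ↥F = p := by rw [hd, hd1, mul_one]
        have hFi : F.index = 2 := by
          have h := Subgroup.card_mul_index F
          rw [hcardF, hNcard] at h
          have : p * F.index = p * 2 := by rw [h]; ring
          exact Nat.eq_of_mul_eq_mul_left hp.pos this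
        have htF : t ∉ F := ht
        have hαtF : α t ∉ F := by
          intro h
          have h' : α (α t) = α t := h
          rw [h1] at h'
          exact ht h'.symm
        have htinvF : t⁻¹ ∉ F := fun h => htF (F.inv_mem_iff.1 h)
        have hfF : α t * t⁻¹ ∈ F :=
          (Subgroup.mul_mem_iff_of_index_two hFi).2 (iff_of_false hαtF htinvF)
        have hself : α (α t * t⁻¹) = α t * t⁻¹ := hfF
        have hself2 : α (α t * t⁻¹) = (α t * t⁻¹)⁻¹ := by
          rw [map_mul, map_inv, h1, mul_inv_rev, inv_inv]
        have hff : (α t * t⁻¹) * (α t * t⁻¹) = 1 := by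
          rw [hself2] at hself
          nth_rewrite 1 [← hself]
          rw [inv_mul_cancel]
        have hfp : (α t * t⁻¹) ^ p = 1 := by
          have hp1 : (⟨α t * t⁻¹, hfF⟩ : ↥F) ^ (Nat.card ↥F) = 1 := pow_card_eq_one'
          rw [hcardF] at hp1
          have := congrArg (Subtype.val) hp1
          simpa using this
        have hord2 : orderOf (α t * t⁻¹) ∣ 2 := by
          apply orderOf_dvd_of_pow_eq_one
          rw [pow_two]; exact hff
        have hordp : orderOf (α t * t⁻¹) ∣ p := orderOf_dvd_of_pow_eq_one hfp
        have hcop : Nat.gcd 2 p = 1 := by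
          have : p ≠ 2 := by omega
          exact (Nat.coprime_primes Nat.prime_two hp).2 (fun h => this h.symm)
        have : orderOf (α t * t⁻¹) ∣ 1 := by
          rw [← hcop]; exact Nat.dvd_gcd hord2 hordp
        have : α t * t⁻¹ = 1 := by
          rw [← pow_one (α t * t⁻¹), ← Nat.dvd_one.1 this]
          exact pow_orderOf_eq_one _
        exact ht (mul_inv_eq_one.1 this)
      · -- card F = 2p : α = id, contradiction
        have hcardF : Nat.card ↥F = 2 * p := by rw [hd, hd2]; ring
        have hFtop : F = ⊤ := Subgroup.eq_top_of_card_eq _ (by rw [hcardF, hNcard])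
        exact ht ((hFtop ▸ Subgroup.mem_top t : t ∈ F))
    · -- α g = g⁻¹ : the main case
      have hdvd2 : (p : ℤ) ∣ n + 1 := by
        have : ((n + 1 : ℤ) : ZMod p) = 0 := by push_cast [hn1]; ring
        exact (ZMod.intCast_zmod_eq_zero_iff_dvd _ _).1 this
      have hαg : α g = g⁻¹ := by
        rw [← hn]
        have : g ^ (n + 1) = 1 := by
          rw [← hg] at hdvd2
          exact orderOf_dvd_iff_zpow_eq_one.1 hdvd2
        rw [zpow_add, zpow_one] at this
        exact (eq_inv_of_mul_eq_one_left this)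
      have hinvP : ∀ x ∈ P, α x = x⁻¹ := by
        intro x hx
        obtain ⟨k, hk⟩ := Subgroup.mem_zpowers_iff.1 hx
        rw [← hk, map_zpow, hαg, inv_zpow]
      have hgp : g ^ (p : ℤ) = 1 := by
        rw [zpow_natCast, ← hg, pow_orderOf_eq_one]
      have hSP : ∀ s ∈ S, s ∉ P := by
        intro s hs hsP
        obtain ⟨k, hk⟩ := Subgroup.mem_zpowers_iff.1 hsP
        set x := g ^ (k * (m + 1)) with hx
        have hxP : x ∈ P := Subgroup.zpow_mem _ (Subgroup.mem_zpowers g) _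
        have hαx : α x⁻¹ = x := by
          rw [map_inv, hinvP x hxP, inv_inv]
        apply h2 x
        rw [hαx, hx, ← zpow_add]
        have hexp : k * (m + 1) + k * (m + 1) = k * ((p : ℤ) + 1) := by
          have : (p : ℤ) = 2 * (m : ℤ) + 1 := by exact_mod_cast hm
          rw [this]; ring
        rw [hexp, mul_comm, zpow_mul, zpow_add, hgp, one_mul, zpow_one, hk]
        exact hs
      haveI hcyc : IsCyclic ↥P := isCyclic_of_prime_card (p := p) hcardP
      have e : ↥P ≃* Multiplicative (ZMod p) := by
        have e0 := (zmodCyclicMulEquiv hcyc).symm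
        rw [hcardP] at e0
        exact e0
      exact gc_isCayley_of_subgroup α S h1 h2 h3 P hPi hinvP hSP e
end

section
/- Let X = GC(G, S, α) be a generalized Cayley graph and let K = {g ∈ G : α(g)·S = S}. Then adjacency in X depends only on the left cosets modulo K: for all x, y ∈ G and all k₁, k₂ ∈ K, the vertices x and y are adjacent in X if and only if x·k₁ and y·k₂ are adjacent in X. (Consequently X is isomorphic to the lexicographic product of its quotient graph X_K over the left cosets of K with the empty graph on |K| vertices.) -/
lemma left_inv_mem {G : Type*} [Group G] {S : Set G} {g : G}
    (h : (fun s => g * s) '' S = S) : ∀ t : G, g * t ∈ S ↔ t ∈ S := by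
  intro t
  constructor
  · intro ht
    rw [← h] at ht
    obtain ⟨u, hu, he⟩ := ht
    simpa [mul_left_cancel he] using hu
  · intro ht
    rw [← h]
    exact ⟨t, ht, rfl⟩

/-- In a generalized Cayley graph `X = GC(G, S, α)`, adjacency depends only
on the left cosets modulo `K = {g ∈ G : α(g)·S = S}`: for `k₁, k₂ ∈ K`, the vertices `x`
and `y` are adjacent iff `x·k₁` and `y·k₂` are adjacent. -/
theorem stmt_18 {G : Type*} [Group G] (α : G ≃* G) (S : Set G)
    (h1 : ∀ x : G, α (α x) = x)
    (h2 : ∀ x : G, α x⁻¹ * x ∉ S)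
    (h3 : ⇑α '' S⁻¹ = S) :
    ∀ x y k₁ k₂ : G, k₁ ∈ {g : G | (fun s => α g * s) '' S = S} →
      k₂ ∈ {g : G | (fun s => α g * s) '' S = S} →
      ((GC α S h1 h2 h3).Adj x y ↔ (GC α S h1 h2 h3).Adj (x * k₁) (y * k₂)) := by
  intro x y k₁ k₂ hk₁ hk₂
  have hL1 := left_inv_mem (S := S) hk₁
  have hL2 := left_inv_mem (S := S) hk₂
  -- s ∈ S ↔ α s⁻¹ ∈ S
  have hαS : ∀ s : G, s ∈ S ↔ α s⁻¹ ∈ S := by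
    intro s
    constructor
    · intro hs
      rw [← h3]
      exact ⟨s⁻¹, by simpa using hs, rfl⟩
    · intro hs
      rw [← h3] at hs
      obtain ⟨u, hu, he⟩ := hs
      have : u = s⁻¹ := α.injective he
      subst this
      simpa using hu
  -- right invariance: t * k₂ ∈ S ↔ t ∈ S
  have hR2 : ∀ t : G, t * k₂ ∈ S ↔ t ∈ S := by
    intro t
    rw [hαS (t * k₂), hαS t]
    have : α (t * k₂)⁻¹ = (α k₂)⁻¹ * α t⁻¹ := by
      simp [mul_inv_rev, map_mul, map_inv]
    rw [this]
    constructor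
    · intro h
      have := (hL2 ((α k₂)⁻¹ * α t⁻¹)).mpr h
      simpa using this
    · intro h
      exact (hL2 ((α k₂)⁻¹ * α t⁻¹)).mp (by simpa using h)
  show α x⁻¹ * y ∈ S ↔ α (x * k₁)⁻¹ * (y * k₂) ∈ S
  set g := α x⁻¹ * y with hg
  have e : α (x * k₁)⁻¹ * (y * k₂) = (α k₁)⁻¹ * (g * k₂) := by
    simp [hg, mul_inv_rev, map_mul, map_inv, mul_assoc]
  rw [e]
  have h4 : g * k₂ ∈ S ↔ (α k₁)⁻¹ * (g * k₂) ∈ S := by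
    constructor
    · intro h
      exact (hL1 _).mp (by simpa using h)
    · intro h
      simpa using (hL1 _).mpr h
  rw [← h4, hR2 g]
end
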